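/- Let M be the stabilizer matrix of an N-to-1 qudit stabilizer code over Z_d (N−1 linearly independent, pairwise symplectically orthogonal rows). Then there exist logical operators, i.e., vectors (a_Z|b_Z), (a_X|b_X) ∈ Z_d^{2N} symplectically orthogonal to every row of M with ⟨(a_Z|b_Z),(a_X|b_X)⟩ = 1, and the N+1 vectors consisting of the rows of M together with (a_Z|b_Z) and (a_X|b_X) are linearly independent. -/

import Mathlib

open Matrix

/-- The standard symplectic form ⟨(a|b),(a'|b')⟩ = a·b' − b·a' on Z_d^{2N}. -/
def symp (d N : ℕ) (p q : (Fin N → ZMod d) × (Fin N → ZMod d)) : ZMod d :=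
  p.1 ⬝ᵥ q.2 - p.2 ⬝ᵥ q.1

/-- `symp` as a bilinear form. -/
noncomputable def sympB (d N : ℕ) :
    LinearMap.BilinForm (ZMod d) ((Fin N → ZMod d) × (Fin N → ZMod d)) :=
  LinearMap.mk₂ (ZMod d) (symp d N)
    (fun p p' q => by
      simp [symp, add_dotProduct]; ring)
    (fun c p q => by
      simp [symp, smul_dotProduct, smul_sub, smul_eq_mul]; ring)
    (fun p q q' => by
      simp [symp, dotProduct_add]; ring)
    (fun c p q => by
      simp [symp, dotProduct_smul, smul_sub, smul_eq_mul]; ring)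

@[simp] lemma sympB_apply (d N : ℕ) (p q : (Fin N → ZMod d) × (Fin N → ZMod d)) :
    sympB d N p q = symp d N p q := rfl

lemma sympB_isAlt (d N : ℕ) : (sympB d N).IsAlt := by
  intro p
  simp [symp, dotProduct_comm]

lemma sympB_nondeg (d N : ℕ) [Fact (Nat.Prime d)] : (sympB d N).Nondegenerate := by
  refine (LinearMap.IsRefl.nondegenerate_iff_separatingLeft (sympB_isAlt d N).isRefl).mpr ?_
  intro p hp
  have h1 : ∀ i, p.1 i = 0 := by
    intro i
    have := hp (0, Pi.single i 1)
    simpa [symp] using this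
  have h2 : ∀ i, p.2 i = 0 := by
    intro i
    have := hp (Pi.single i 1, 0)
    have h := this
    simp [symp] at h
    simpa using h
  exact Prod.ext (funext h1) (funext h2)

/-- For a stabilizer matrix M (N−1 linearly independent, pairwise symplectically
orthogonal rows) there exist logical operators: vectors (a_Z|b_Z), (a_X|b_X)
symplectically orthogonal to every row of M with ⟨(a_Z|b_Z),(a_X|b_X)⟩ = 1, such
that the rows of M together with these two vectors are linearly independent. -/
theorem exists_logical_operators (d N : ℕ) [Fact (Nat.Prime d)] (hN : 1 ≤ N)
    (row : Fin (N - 1) → (Fin N → ZMod d) × (Fin N → ZMod d))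
    (hind : LinearIndependent (ZMod d) row)
    (hsymp : ∀ i j, symp d N (row i) (row j) = 0) :
    ∃ zL xL : (Fin N → ZMod d) × (Fin N → ZMod d),
      (∀ i, symp d N (row i) zL = 0) ∧
      (∀ i, symp d N (row i) xL = 0) ∧
      symp d N zL xL = 1 ∧
      LinearIndependent (ZMod d)
        (Sum.elim row (fun j : Fin 2 => if j = 0 then zL else xL)) := by
  classical
  set B := sympB d N with hB
  have halt : B.IsAlt := sympB_isAlt d N
  have hrefl : B.IsRefl := halt.isRefl
  have hnd : B.Nondegenerate := sympB_nondeg d N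
  set W : Submodule (ZMod d) _ := Submodule.span (ZMod d) (Set.range row) with hW
  have hrowW : ∀ i, row i ∈ W := fun i => Submodule.subset_span ⟨i, rfl⟩
  have hWle : W ≤ B.orthogonal W := by
    rw [hW, Submodule.span_le]
    rintro _ ⟨j, rfl⟩
    show row j ∈ B.orthogonal W
    rw [LinearMap.BilinForm.mem_orthogonal_iff]
    intro n hn
    induction hn using Submodule.span_induction with
    | mem x hx => obtain ⟨i, rfl⟩ := hx; exact hsymp i j
    | zero => simp [LinearMap.BilinForm.IsOrtho]
    | add x y _ _ hx hy =>
        simp only [LinearMap.BilinForm.IsOrtho, map_add, LinearMap.add_apply] at *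
        rw [hx, hy, add_zero]
    | smul c x _ hx =>
        simp only [LinearMap.BilinForm.IsOrtho, LinearMap.map_smul,
          LinearMap.smul_apply] at *
        rw [hx, smul_zero]
  have hdimV : Module.finrank (ZMod d) ((Fin N → ZMod d) × (Fin N → ZMod d)) = 2 * N := by
    simp [Module.finrank_prod]; ring
  have hdimW : Module.finrank (ZMod d) W = N - 1 := by
    rw [hW, finrank_span_eq_card hind, Fintype.card_fin]
  have hdimO : Module.finrank (ZMod d) (B.orthogonal W) = 2 * N - (N - 1) := by
    rw [LinearMap.BilinForm.finrank_orthogonal hnd, hdimV, hdimW]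
  have hlt : Module.finrank (ZMod d) W < Module.finrank (ZMod d) (B.orthogonal W) := by
    rw [hdimW, hdimO]; omega
  have hne : W ≠ B.orthogonal W := fun h => by rw [← h] at hlt; omega
  obtain ⟨zL, hzLo, hzLW⟩ := SetLike.exists_of_lt
    (lt_of_le_of_ne hWle hne : W < B.orthogonal W)
  have hx : ¬ ∀ n ∈ B.orthogonal W, B n zL = 0 := by
    intro h
    exact hzLW (by
      rw [← LinearMap.BilinForm.orthogonal_orthogonal hnd hrefl W]
      exact h)
  push_neg at hx
  obtain ⟨x, hxo, hxzL⟩ := hx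
  have hzx : B zL x ≠ 0 := by
    intro h
    apply hxzL
    rw [← halt.neg_eq zL x, h, neg_zero]
  set c : ZMod d := B zL x with hc
  set xL : (Fin N → ZMod d) × (Fin N → ZMod d) := c⁻¹ • x with hxL
  have hxLo : xL ∈ B.orthogonal W := Submodule.smul_mem _ _ hxo
  have hone : B zL xL = 1 := by
    rw [hxL, LinearMap.map_smul, smul_eq_mul, ← hc, inv_mul_cancel₀ hzx]
  have hrzL : ∀ i, symp d N (row i) zL = 0 := fun i => hzLo (row i) (hrowW i)
  have hrxL : ∀ i, symp d N (row i) xL = 0 := fun i => hxLo (row i) (hrowW i)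
  refine ⟨zL, xL, hrzL, hrxL, hone, ?_⟩
  rw [Fintype.linearIndependent_iff]
  intro g hg
  simp only [Fintype.sum_sum_type, Sum.elim_inl, Sum.elim_inr] at hg
  have hgfin2 : ∑ j : Fin 2, g (Sum.inr j) • (if j = 0 then zL else xL)
      = g (Sum.inr 0) • zL + g (Sum.inr 1) • xL := by
    rw [Fin.sum_univ_two]; norm_num
  rw [hgfin2] at hg
  have hpair : ∀ v : (Fin N → ZMod d) × (Fin N → ZMod d),
      B (∑ i, g (Sum.inl i) • row i + (g (Sum.inr 0) • zL + g (Sum.inr 1) • xL)) v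
      = ∑ i, g (Sum.inl i) * B (row i) v
        + (g (Sum.inr 0) * B zL v + g (Sum.inr 1) * B xL v) := by
    intro v
    simp [map_sum, smul_eq_mul]
  have h0 : g (Sum.inr 0) = 0 := by
    have hv := hpair xL
    rw [hg] at hv
    simp only [map_zero, LinearMap.zero_apply] at hv
    rw [Finset.sum_congr rfl (fun i _ => by rw [show B (row i) xL = 0 from hrxL i, mul_zero])]
      at hv
    rw [halt xL, hone] at hv
    simpa using hv.symm
  have h1 : g (Sum.inr 1) = 0 := by
    have hv := hpair zL
    rw [hg] at hv
    simp only [map_zero, LinearMap.zero_apply] at hv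
    rw [Finset.sum_congr rfl (fun i _ => by rw [show B (row i) zL = 0 from hrzL i, mul_zero])]
      at hv
    rw [halt zL] at hv
    have hxz1 : B xL zL = -1 := by
      rw [← halt.neg_eq zL xL, hone]
    rw [hxz1] at hv
    simpa using hv.symm
  have hrest : ∑ i, g (Sum.inl i) • row i = 0 := by
    rw [h0, h1] at hg
    simpa using hg
  have hz := (Fintype.linearIndependent_iff.mp hind) (fun i => g (Sum.inl i)) hrest
  rintro (i | j)
  · exact hz i
  · fin_cases j
    · exact h0
    · exact h1
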